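/- Let P be a reversible transition matrix on finite V with stationary distribution π and spectral value λ = max{|λ₂|,|λ_n|}. Then for any S, T ⊆ V and any C² function h: ℝ → ℝ, |∑_{v∈S} π(v) h(P(v,T)) − π(S) h(π(T)) − h'(π(T))·(Q(S,T) − π(S)π(T))| ≤ (K₂(h)/2)·λ²·π(T)(1 − π(T)), where Q(S,T) = ∑_{v∈S} π(v) P(v,T) and K₂(h) = max_{x∈[0,1]}|h''(x)|. -/

import Mathlib

open Set

private lemma deriv_h_contDiff {h : ℝ → ℝ} (hC2 : ContDiff ℝ 2 h) :
    Differentiable ℝ h ∧ ContDiff ℝ 1 (deriv h) := by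
  rw [show (2 : WithTop ℕ∞) = 1 + 1 from rfl, contDiff_succ_iff_deriv] at hC2
  exact ⟨hC2.1, hC2.2.2⟩

/-- Taylor bound, one-sided version (expansion point `y` below `x`). -/
private lemma taylor_core {h : ℝ → ℝ} (hC2 : ContDiff ℝ 2 h) {K y x : ℝ} (hyx : y < x)
    (hK : ∀ z ∈ Set.Icc y x, |deriv (deriv h) z| ≤ K) :
    |h x - h y - deriv h y * (x - y)| ≤ K / 2 * (x - y) ^ 2 := by
  obtain ⟨hd1, hd2c⟩ := deriv_h_contDiff hC2
  have hd2 : Differentiable ℝ (deriv h) := hd2c.differentiable one_ne_zero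
  set s := Set.Icc y x with hs
  have hu : UniqueDiffOn ℝ s := uniqueDiffOn_Icc hyx
  have h1 : ∀ z ∈ s, iteratedDerivWithin 1 h s z = deriv h z := by
    intro z hz
    rw [iteratedDerivWithin_one]
    exact (hd1 z).derivWithin (hu z hz)
  have hf : ContDiffOn ℝ 1 h s := (hC2.of_le one_le_two).contDiffOn
  have hf' : DifferentiableOn ℝ (iteratedDerivWithin 1 h s) (Set.Ioo y x) := by
    refine DifferentiableOn.congr (f := deriv h) (hd2.differentiableOn) ?_
    intro z hz; exact h1 z (Set.Ioo_subset_Icc_self hz)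
  obtain ⟨c, hc, hcal⟩ := taylor_mean_remainder_lagrange (n := 1) hyx.ne
    (by rwa [Set.uIcc_of_le hyx.le]) (by rwa [Set.uIcc_of_le hyx.le, Set.uIoo_of_le hyx.le])
  rw [Set.uIoo_of_le hyx.le] at hc
  rw [Set.uIcc_of_le hyx.le] at hcal
  have hc' : c ∈ s := Set.Ioo_subset_Icc_self hc
  have h2 : iteratedDerivWithin 2 h s c = deriv (deriv h) c := by
    rw [show (2 : ℕ) = 1 + 1 from rfl, iteratedDerivWithin_succ,
      derivWithin_congr h1 (h1 c hc')]
    exact (hd2 c).derivWithin (hu c hc')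
  have hT : taylorWithinEval h 1 s y x = h y + (x - y) * deriv h y := by
    rw [taylor_within_apply]
    simp [Finset.sum_range_succ, h1 y (Set.left_mem_Icc.2 hyx.le), smul_eq_mul]
  have key : h x - h y - deriv h y * (x - y) = deriv (deriv h) c * (x - y) ^ 2 / 2 := by
    have h3 := hcal
    rw [hT, h2] at h3
    norm_num [Nat.factorial] at h3
    linarith [h3]
  rw [key]
  have hbc : |deriv (deriv h) c| ≤ K := hK c hc'
  have habs : |deriv (deriv h) c * (x - y) ^ 2 / 2| = |deriv (deriv h) c| * (x - y) ^ 2 / 2 := by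
    rw [abs_div, abs_mul, abs_of_nonneg (sq_nonneg (x - y))]
    norm_num
  rw [habs]
  nlinarith [sq_nonneg (x - y), abs_nonneg (deriv (deriv h) c)]

/-- Taylor bound on `[0,1]`, both-sided. -/
private lemma taylor_both {h : ℝ → ℝ} (hC2 : ContDiff ℝ 2 h) {K : ℝ}
    (hK : ∀ z ∈ Set.Icc (0:ℝ) 1, |deriv (deriv h) z| ≤ K)
    {x y : ℝ} (hx : x ∈ Set.Icc (0:ℝ) 1) (hy : y ∈ Set.Icc (0:ℝ) 1) :
    |h x - h y - deriv h y * (x - y)| ≤ K / 2 * (x - y) ^ 2 := by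
  have hK0 : 0 ≤ K := le_trans (abs_nonneg _) (hK 0 (by norm_num))
  rcases lt_trichotomy x y with hlt | heq | hgt
  · -- x < y : use the negated function
    set g : ℝ → ℝ := fun t => h (-t) with hgdef
    have hgC2 : ContDiff ℝ 2 g := hC2.comp contDiff_neg
    have hg1 : deriv g = fun t => -deriv h (-t) := by
      funext t; exact deriv_comp_neg h t
    have hg2 : ∀ t, deriv (deriv g) t = deriv (deriv h) (-t) := by
      intro t
      rw [hg1]
      have e1 : deriv (fun t : ℝ => -deriv h (-t)) t = -deriv (fun t : ℝ => deriv h (-t)) t :=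
        deriv.neg
      rw [e1, deriv_comp_neg (deriv h) t, neg_neg]
    have hcore := taylor_core hgC2 (K := K) (y := -y) (x := -x) (by linarith)
      (fun z hz => by
        rw [hg2]
        refine hK (-z) ?_
        obtain ⟨h1, h2⟩ := hz
        obtain ⟨hx1, hx2⟩ := hx
        obtain ⟨hy1, hy2⟩ := hy
        constructor <;> linarith)
    rw [hg1] at hcore
    simp only [hgdef, neg_neg] at hcore
    have e2 : h x - h y - -deriv h y * (-x - -y) = h x - h y - deriv h y * (x - y) := by ring
    rw [e2] at hcore
    have e3 : (-x - -y) ^ 2 = (x - y) ^ 2 := by ring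
    rw [e3] at hcore
    exact hcore
  · subst heq
    simp only [sub_self, mul_zero, sub_zero, abs_zero]
    positivity
  · exact taylor_core hC2 hgt (fun z hz => hK z ⟨le_trans hy.1 hz.1, le_trans hz.2 hx.2⟩)

/-- Lemma: second-order approximation of `Q_h(S,T) = ∑_{v∈S} π(v) h(P(v,T))`. -/
theorem stmt_2 {V : Type*} [Fintype V] [Nonempty V]
    (P : V → V → ℝ) (π : V → ℝ)
    (hP0 : ∀ u v, 0 ≤ P u v) (hProw : ∀ u, ∑ v, P u v = 1)
    (hπ0 : ∀ v, 0 ≤ π v) (hπ1 : ∑ v, π v = 1)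
    (hrev : ∀ u v, π u * P u v = π v * P v u)
    (lam : ℝ) (hlam : 0 ≤ lam)
    (hexp : ∀ g : V → ℝ, ∑ v, π v * g v = 0 →
      ∑ u, π u * (∑ v, P u v * g v) ^ 2 ≤ lam ^ 2 * ∑ v, π v * g v ^ 2)
    (h : ℝ → ℝ) (hC2 : ContDiff ℝ 2 h) (K₂ : ℝ)
    (hK₂ : IsGreatest ((fun x => |deriv (deriv h) x|) '' Set.Icc (0:ℝ) 1) K₂)
    (S T : Finset V) :
    |(∑ v ∈ S, π v * h (∑ t ∈ T, P v t)) - (∑ v ∈ S, π v) * h (∑ t ∈ T, π t)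
        - deriv h (∑ t ∈ T, π t) *
          ((∑ v ∈ S, π v * (∑ t ∈ T, P v t)) - (∑ v ∈ S, π v) * (∑ t ∈ T, π t))|
      ≤ K₂ / 2 * lam ^ 2 * (∑ t ∈ T, π t) * (1 - ∑ t ∈ T, π t) := by
  classical
  set p : ℝ := ∑ t ∈ T, π t with hp
  set f : V → ℝ := fun v => ∑ t ∈ T, P v t with hf
  have hK : ∀ z ∈ Set.Icc (0:ℝ) 1, |deriv (deriv h) z| ≤ K₂ := fun z hz => hK₂.2 ⟨z, hz, rfl⟩
  have hK0 : 0 ≤ K₂ := by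
    obtain ⟨z, _, hz⟩ := hK₂.1
    rw [← hz]; exact abs_nonneg _
  have hp0 : 0 ≤ p := Finset.sum_nonneg fun t _ => hπ0 t
  have hp1 : p ≤ 1 := by
    rw [hp, ← hπ1]
    exact Finset.sum_le_sum_of_subset_of_nonneg (Finset.subset_univ T) fun t _ _ => hπ0 t
  have hf01 : ∀ v, f v ∈ Set.Icc (0:ℝ) 1 := by
    intro v
    constructor
    · exact Finset.sum_nonneg fun t _ => hP0 v t
    · rw [hf]
      simp only
      rw [← hProw v]
      exact Finset.sum_le_sum_of_subset_of_nonneg (Finset.subset_univ T) fun t _ _ => hP0 v t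
  set g : V → ℝ := fun v => (if v ∈ T then (1:ℝ) else 0) - p with hg
  have hsplit : ∀ a b : ℝ, ∑ v, π v * (if v ∈ T then a else b) = a * p + b * (1 - p) := by
    intro a b
    have e : ∀ v : V, π v * (if v ∈ T then a else b)
        = π v * b + (if v ∈ T then π v * (a - b) else 0) := by
      intro v; by_cases hv : v ∈ T
      · simp only [if_pos hv]; ring
      · simp only [if_neg hv]; ring
    rw [Finset.sum_congr rfl fun v _ => e v, Finset.sum_add_distrib,
      Finset.sum_ite_mem, Finset.univ_inter, ← Finset.sum_mul, hπ1, ← Finset.sum_mul, ← hp]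
    ring
  have hg0 : ∑ v, π v * g v = 0 := by
    have e : ∀ v : V, π v * g v = π v * (if v ∈ T then (1 - p) else (0 - p)) := by
      intro v
      rw [hg]
      by_cases hv : v ∈ T
      · simp only [if_pos hv]
      · simp only [if_neg hv]
    rw [Finset.sum_congr rfl fun v _ => e v, hsplit]
    ring
  have hgvar : ∑ v, π v * g v ^ 2 = p * (1 - p) := by
    have e : ∀ v : V, π v * g v ^ 2 = π v * (if v ∈ T then (1 - p)^2 else (0 - p)^2) := by
      intro v
      rw [hg]
      by_cases hv : v ∈ T
      · simp only [if_pos hv]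
      · simp only [if_neg hv]
    rw [Finset.sum_congr rfl fun v _ => e v, hsplit]
    ring
  have hPg : ∀ u, ∑ v, P u v * g v = f u - p := by
    intro u
    have e : ∀ v : V, P u v * g v = (if v ∈ T then P u v else 0) - P u v * p := by
      intro v
      rw [hg]
      by_cases hv : v ∈ T
      · simp only [if_pos hv]; ring
      · simp only [if_neg hv]; ring
    rw [Finset.sum_congr rfl fun v _ => e v, Finset.sum_sub_distrib,
      Finset.sum_ite_mem, Finset.univ_inter, ← Finset.sum_mul, hProw u, hf]
    simp
  have hvar : ∑ u, π u * (f u - p) ^ 2 ≤ lam ^ 2 * (p * (1 - p)) := by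
    have h1 := hexp g hg0
    rw [hgvar] at h1
    calc ∑ u, π u * (f u - p) ^ 2 = ∑ u, π u * (∑ v, P u v * g v) ^ 2 :=
          Finset.sum_congr rfl fun u _ => by rw [hPg u]
      _ ≤ lam ^ 2 * (p * (1 - p)) := h1
  have key : (∑ v ∈ S, π v * h (f v)) - (∑ v ∈ S, π v) * h p
      - deriv h p * ((∑ v ∈ S, π v * f v) - (∑ v ∈ S, π v) * p)
      = ∑ v ∈ S, π v * (h (f v) - h p - deriv h p * (f v - p)) := by
    have e : ∀ v : V, π v * (h (f v) - h p - deriv h p * (f v - p))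
        = π v * h (f v) - π v * h p - (deriv h p * (π v * f v) - deriv h p * (π v * p)) :=
      fun v => by ring
    rw [Finset.sum_congr rfl fun v _ => e v]
    simp only [Finset.sum_sub_distrib, ← Finset.mul_sum, ← Finset.sum_mul]
    ring
  rw [key]
  calc |∑ v ∈ S, π v * (h (f v) - h p - deriv h p * (f v - p))|
      ≤ ∑ v ∈ S, |π v * (h (f v) - h p - deriv h p * (f v - p))| :=
        Finset.abs_sum_le_sum_abs _ _
    _ ≤ ∑ v ∈ S, π v * (K₂ / 2 * (f v - p) ^ 2) := by
        refine Finset.sum_le_sum fun v _ => ?_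
        rw [abs_mul, abs_of_nonneg (hπ0 v)]
        exact mul_le_mul_of_nonneg_left
          (taylor_both hC2 hK (hf01 v) ⟨hp0, hp1⟩) (hπ0 v)
    _ ≤ ∑ v, π v * (K₂ / 2 * (f v - p) ^ 2) := by
        refine Finset.sum_le_sum_of_subset_of_nonneg (Finset.subset_univ S) fun v _ _ => ?_
        exact mul_nonneg (hπ0 v) (mul_nonneg (by positivity) (sq_nonneg _))
    _ = K₂ / 2 * ∑ v, π v * (f v - p) ^ 2 := by
        rw [Finset.mul_sum]; exact Finset.sum_congr rfl fun v _ => by ring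
    _ ≤ K₂ / 2 * (lam ^ 2 * (p * (1 - p))) :=
        mul_le_mul_of_nonneg_left hvar (by positivity)
    _ = K₂ / 2 * lam ^ 2 * p * (1 - p) := by ring
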